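/- Let f : ℝ → ℂ be integrable with compact support, and suppose there exists δ > 0 such that the Fourier transform 𝓕f(λ) = ∫_ℝ e^{−i λ x} f(x) dx vanishes for all real λ with |λ| < δ. Then f = 0 almost everywhere. -/

import Mathlib

open MeasureTheory Filter Topology
open scoped ContDiff RealInnerProductSpace

open Complex Real FourierTransform SchwartzMap in
/-- A smooth compactly supported function is a Schwartz function. -/
noncomputable def schwartzOfCompactSupport (g : ℝ → ℂ) (hg : ContDiff ℝ ∞ g)
    (hsupp : HasCompactSupport g) : SchwartzMap ℝ ℂ where
  toFun := g
  smooth' := hg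
  decay' := by
    intro k n
    have h1 : HasCompactSupport (fun x : ℝ => ‖x‖ ^ k * ‖iteratedFDeriv ℝ n g x‖) := by
      apply HasCompactSupport.mul_left
      exact (hsupp.iteratedFDeriv n).norm
    have h2 : Continuous (fun x : ℝ => ‖x‖ ^ k * ‖iteratedFDeriv ℝ n g x‖) := by
      exact ((continuous_norm.pow k).mul
        ((hg.continuous_iteratedFDeriv (by exact_mod_cast le_top)).norm))
    obtain ⟨C, hC⟩ := h1.exists_bound_of_continuous h2
    refine ⟨C, fun x => ?_⟩
    have := hC x
    rwa [Real.norm_eq_abs, _root_.abs_of_nonneg (by positivity)] at this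

open Complex Real FourierTransform SchwartzMap in
/-- An integrable, compactly supported function on `ℝ` whose Fourier transform
vanishes on a neighborhood `(-δ, δ)` of `0` vanishes almost everywhere. -/
theorem compactly_supported_fourier_vanishing_near_zero
    (f : ℝ → ℂ) (hf_int : Integrable f) (hf_supp : HasCompactSupport f)
    (δ : ℝ) (hδ : 0 < δ)
    (hvanish : ∀ lam : ℝ, |lam| < δ →
      (∫ x : ℝ, Complex.exp (-(Complex.I * (lam : ℂ) * (x : ℂ))) * f x) = 0) :
    ∀ᵐ x : ℝ, f x = 0 := by
  set G : ℂ → ℂ := fun z => ∫ x : ℝ, Complex.exp (-(Complex.I * z * (x : ℂ))) * f x with hG_def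
  -- the support is contained in a ball of radius R
  obtain ⟨r, hr⟩ := hf_supp.isCompact.isBounded.subset_closedBall 0
  set R : ℝ := max r 1 with hR_def
  have hR : 0 < R := lt_of_lt_of_le one_pos (le_max_right _ _)
  have hmemR : ∀ x : ℝ, f x ≠ 0 → |x| ≤ R := by
    intro x hx
    have : x ∈ tsupport f := subset_tsupport f (by simpa using hx)
    have := hr this
    rw [Metric.mem_closedBall, Real.dist_eq, sub_zero] at this
    exact this.trans (le_max_left _ _)
  -- G is entire
  have hGdiff : Differentiable ℂ G := by
    intro z₀
    set C : ℝ := Real.exp ((|z₀.im| + 1) * R) with hC_def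
    have hC1 : 1 ≤ C := by
      rw [hC_def, ← Real.exp_zero]
      exact Real.exp_le_exp.2 (by positivity)
    have hnorm : ∀ (z : ℂ) (x : ℝ), z ∈ Metric.ball z₀ 1 →
        ‖Complex.exp (-(Complex.I * z * (x : ℂ)))‖ * ‖f x‖ ≤ C * ‖f x‖ := by
      intro z x hz
      by_cases hfx : f x = 0
      · simp [hfx]
      · have hxR : |x| ≤ R := hmemR x hfx
        have him : |z.im| ≤ |z₀.im| + 1 := by
          have : |z.im - z₀.im| ≤ dist z z₀ := by
            simpa [Complex.dist_eq] using Complex.abs_im_le_norm (z - z₀)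
          have hd : dist z z₀ < 1 := by simpa [Metric.mem_ball] using hz
          calc |z.im| ≤ |z₀.im| + |z.im - z₀.im| := by
                have := abs_sub_abs_le_abs_sub z.im z₀.im
                have h2 := abs_add_le z₀.im (z.im - z₀.im)
                simpa using h2.trans_eq' (by ring_nf)
            _ ≤ |z₀.im| + 1 := by linarith
        have hre : (-(Complex.I * z * (x : ℂ))).re = x * z.im := by
          simp [Complex.mul_re, Complex.mul_im]
          ring
        have : ‖Complex.exp (-(Complex.I * z * (x : ℂ)))‖ = Real.exp (x * z.im) := by
          rw [Complex.norm_exp, hre]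
        rw [this]
        have hle : x * z.im ≤ (|z₀.im| + 1) * R := by
          calc x * z.im ≤ |x * z.im| := le_abs_self _
            _ = |x| * |z.im| := abs_mul _ _
            _ ≤ R * (|z₀.im| + 1) := by
                apply mul_le_mul hxR him (abs_nonneg _) hR.le
            _ = (|z₀.im| + 1) * R := by ring
        exact mul_le_mul_of_nonneg_right (Real.exp_le_exp.2 hle) (norm_nonneg _)
    have hmeas : ∀ z : ℂ, AEStronglyMeasurable
        (fun x : ℝ => Complex.exp (-(Complex.I * z * (x : ℂ))) * f x) volume := by
      intro z
      exact (Complex.continuous_exp.comp (by fun_prop)).aestronglyMeasurable.mul hf_int.1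
    have key := hasDerivAt_integral_of_dominated_loc_of_deriv_le
      (F := fun (z : ℂ) (x : ℝ) => Complex.exp (-(Complex.I * z * (x : ℂ))) * f x)
      (F' := fun (z : ℂ) (x : ℝ) =>
        (-(Complex.I * (x : ℂ))) * (Complex.exp (-(Complex.I * z * (x : ℂ))) * f x))
      (x₀ := z₀) (bound := fun x => R * C * ‖f x‖) (Metric.ball_mem_nhds z₀ one_pos)
      (Eventually.of_forall fun z => hmeas z)
      (by -- Integrable (F z₀)
        apply Integrable.mono' (hf_int.norm.const_mul C) (hmeas z₀)
        filter_upwards with x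
        rw [norm_mul]
        exact hnorm z₀ x (Metric.mem_ball_self one_pos))
      (by -- AEStronglyMeasurable (F' z₀)
        exact ((by fun_prop : Continuous fun x : ℝ =>
          (-(Complex.I * (x : ℂ)))).aestronglyMeasurable.mul (hmeas z₀)))
      (by -- bound
        filter_upwards with x z hz
        rw [norm_mul, norm_mul]
        by_cases hfx : f x = 0
        · simp [hfx]
        · have h1 : ‖-(Complex.I * (x : ℂ))‖ ≤ R := by
            simpa [Complex.norm_real] using hmemR x hfx
          calc ‖-(Complex.I * (x : ℂ))‖ * (‖Complex.exp (-(Complex.I * z * (x : ℂ)))‖ * ‖f x‖)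
              ≤ R * (C * ‖f x‖) := by
                apply mul_le_mul h1 (hnorm z x hz) (by positivity) hR.le
            _ = R * C * ‖f x‖ := by ring)
      ((hf_int.norm.const_mul (R * C)))
      (by -- HasDerivAt
        filter_upwards with x z _
        have h1 : HasDerivAt (fun z : ℂ => -(Complex.I * z * (x : ℂ)))
            (-(Complex.I * (x : ℂ))) z := by
          have : HasDerivAt (fun z : ℂ => (-(Complex.I * (x : ℂ))) * z)
              (-(Complex.I * (x : ℂ))) z := by
            simpa using (hasDerivAt_id z).const_mul (-(Complex.I * (x : ℂ)))
          convert this using 2 with w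
          ring
        have h2 := (h1.cexp).mul_const (f x)
        exact h2.congr_deriv (by ring))
    exact ⟨_, key.2⟩
  -- G vanishes identically by analytic continuation
  have hGzero : ∀ z : ℂ, G z = 0 := by
    have han : AnalyticOnNhd ℂ G Set.univ := hGdiff.differentiableOn.analyticOnNhd isOpen_univ
    have hfreq : ∃ᶠ z in 𝓝[≠] (0 : ℂ), G z = 0 := by
      have htend : Tendsto (fun n : ℕ => ((δ / (n + 2) : ℝ) : ℂ)) atTop (𝓝[≠] (0 : ℂ)) := by
        apply tendsto_nhdsWithin_of_tendsto_nhds_of_eventually_within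
        · have : Tendsto (fun n : ℕ => (δ / (n + 2) : ℝ)) atTop (𝓝 0) := by
            apply Tendsto.div_atTop (tendsto_const_nhds)
            exact tendsto_atTop_add_const_right _ _ tendsto_natCast_atTop_atTop
          exact (Complex.continuous_ofReal.tendsto 0).comp this
        · filter_upwards with n
          have : (0 : ℝ) < δ / (n + 2) := by positivity
          simp only [Set.mem_compl_iff, Set.mem_singleton_iff]
          exact_mod_cast ne_of_gt this
      apply htend.frequently
      apply Frequently.of_forall
      intro n
      apply hvanish
      rw [abs_of_pos (by positivity)]
      rw [div_lt_iff₀ (by positivity)]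
      nlinarith [hδ]
    have := han.eqOn_zero_of_preconnected_of_frequently_eq_zero
      isPreconnected_univ (Set.mem_univ (0 : ℂ)) hfreq
    intro z
    exact this (Set.mem_univ z)
  -- hence the Fourier transform of f vanishes
  have hFf : ∀ w : ℝ, 𝓕 f w = 0 := by
    intro w
    rw [Real.fourier_eq']
    rw [← hGzero ((2 * π * w : ℝ) : ℂ)]
    congr 1 with v
    rw [smul_eq_mul]
    congr 1
    have : (inner ℝ v w : ℝ) = v * w := by
      simp [real_inner_comm]
      ring
    rw [this]
    push_cast
    ring
  -- duality with Schwartz test functions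
  apply ae_eq_zero_of_integral_contDiff_smul_eq_zero hf_int.locallyIntegrable
  intro g g_diff g_supp
  have gc_diff : ContDiff ℝ ∞ (fun x : ℝ => (g x : ℂ)) :=
    Complex.ofRealCLM.contDiff.comp g_diff
  have gc_supp : HasCompactSupport (fun x : ℝ => (g x : ℂ)) :=
    g_supp.comp_left (g := fun y : ℝ => (y : ℂ)) (by simp)
  set φ : SchwartzMap ℝ ℂ := schwartzOfCompactSupport _ gc_diff gc_supp with hφ
  set h : SchwartzMap ℝ ℂ := (fourierTransformCLE ℂ 𝓢(ℝ, ℂ) (F := 𝓢(ℝ, ℂ))).symm φ with hh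
  have hφh : 𝓕 (⇑h) = fun x : ℝ => (g x : ℂ) := by
    have : fourierTransformCLE ℂ 𝓢(ℝ, ℂ) (F := 𝓢(ℝ, ℂ)) h = φ := by
      rw [hh, ContinuousLinearEquiv.apply_symm_apply]
    have h2 : ⇑(fourierTransformCLE ℂ 𝓢(ℝ, ℂ) (F := 𝓢(ℝ, ℂ)) h) = 𝓕 (⇑h) := rfl
    rw [this] at h2
    exact h2.symm
  have hflip : (innerₗ ℝ).flip = innerₗ ℝ := by
    refine LinearMap.ext fun x => LinearMap.ext fun y => ?_
    exact real_inner_comm x y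
  have key := VectorFourier.integral_fourierIntegral_smul_eq_flip
    (e := Real.fourierChar) (L := innerₗ ℝ) (μ := (volume : Measure ℝ))
    (ν := (volume : Measure ℝ)) (f := ⇑h) (g := f)
    Real.continuous_fourierChar continuous_inner h.integrable hf_int
  rw [hflip] at key
  have hL : ∀ ξ : ℝ, VectorFourier.fourierIntegral Real.fourierChar volume (innerₗ ℝ) (⇑h) ξ
      = (g ξ : ℂ) := by
    intro ξ
    exact congrFun hφh ξ
  have hR' : ∀ x : ℝ, VectorFourier.fourierIntegral Real.fourierChar volume (innerₗ ℝ) f x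
      = 0 := fun x => hFf x
  simp only [hL, hR', smul_zero, integral_zero] at key
  calc ∫ x : ℝ, g x • f x = ∫ x : ℝ, (g x : ℂ) • f x := by
        congr 1 with x
    _ = 0 := key
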